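/- Let G be the niche graph of a bipartite tournament. Then G has a matching M leaving at most 4 vertices unsaturated; equivalently, the maximum matching of G has size at least (|V(G)| − 4)/2. -/

import Mathlib

structure BipTournament (α : Type*) where
  U : Set α
  V : Set α
  A : α → α → Prop
  disj : Disjoint U V
  cover : U ∪ V = Set.univ
  orient : ∀ u ∈ U, ∀ v ∈ V, Xor' (A u v) (A v u)
  arcs : ∀ x y, A x y → (x ∈ U ∧ y ∈ V) ∨ (x ∈ V ∧ y ∈ U)

def BipTournament.outN {α : Type*} (D : BipTournament α) (x : α) : Set α := {y | D.A x y}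

def BipTournament.inN {α : Type*} (D : BipTournament α) (x : α) : Set α := {y | D.A y x}

def BipTournament.niche {α : Type*} (D : BipTournament α) : SimpleGraph α where
  Adj x y := x ≠ y ∧ ((∃ w, D.A x w ∧ D.A y w) ∨ (∃ w, D.A w x ∧ D.A w y))
  symm := by
    constructor
    rintro x y ⟨h, h'⟩
    exact ⟨h.symm, h'.imp (fun ⟨w, a, b⟩ => ⟨w, b, a⟩) (fun ⟨w, a, b⟩ => ⟨w, b, a⟩)⟩
  loopless := ⟨fun x h => h.1 rfl⟩

/-- Greedy construction of a maximal matching inside a finite vertex set. -/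
lemma greedy_matching {α : Type*} [Fintype α] (G : SimpleGraph α) (s : Set α) :
    ∃ M : G.Subgraph, M.IsMatching ∧ M.verts ⊆ s ∧
      ∀ x ∈ s \ M.verts, ∀ y ∈ s \ M.verts, ¬ G.Adj x y := by
  classical
  obtain ⟨n, hn⟩ : ∃ n, s.ncard ≤ n := ⟨s.ncard, le_rfl⟩
  induction n generalizing s with
  | zero =>
    have hs : s = ∅ := by
      have := (Set.ncard_eq_zero (Set.toFinite s)).mp (Nat.le_zero.mp hn)
      exact this
    refine ⟨⊥, ?_, ?_, ?_⟩
    · intro v hv; simp [SimpleGraph.Subgraph.verts] at hv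
    · simp
    · intro x hx; subst hs; simp at hx
  | succ n ih =>
    by_cases h : ∃ x ∈ s, ∃ y ∈ s, G.Adj x y
    · obtain ⟨x, hx, y, hy, hxy⟩ := h
      have hne : x ≠ y := hxy.ne
      set s' : Set α := s \ {x, y} with hs'
      have hcard : s'.ncard ≤ n := by
        have h1 : s'.ncard < s.ncard := by
          apply Set.ncard_lt_ncard
          · constructor
            · exact Set.diff_subset
            · intro hsub
              exact ((hsub hx).2 (by simp))
          · exact Set.toFinite s
        omega
      obtain ⟨M, hM, hMv, hMmax⟩ := ih s' hcard
      refine ⟨M ⊔ G.subgraphOfAdj hxy, ?_, ?_, ?_⟩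
      · apply hM.sup (SimpleGraph.Subgraph.IsMatching.subgraphOfAdj hxy)
        have h1 : M.support ⊆ s' := M.support_subset_verts.trans hMv
        rw [SimpleGraph.support_subgraphOfAdj]
        refine Set.disjoint_left.mpr fun a ha ha' => ?_
        exact (h1 ha).2 ha'
      · intro a ha
        rcases ha with ha | ha
        · exact (hMv ha).1
        · rcases ha with rfl | ha
          · exact hx
          · simp only [Set.mem_singleton_iff] at ha; subst ha; exact hy
      · intro a ha b hb hab
        simp only [SimpleGraph.Subgraph.verts_sup, SimpleGraph.subgraphOfAdj_verts,
          Set.mem_diff, Set.mem_union, not_or, Set.mem_insert_iff,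
          Set.mem_singleton_iff] at ha hb
        refine hMmax a ⟨⟨ha.1, ?_⟩, ha.2.1⟩ b ⟨⟨hb.1, ?_⟩, hb.2.1⟩ hab
        · simp [ha.2.2]
        · simp [hb.2.2]
    · push_neg at h
      refine ⟨⊥, ?_, by simp, ?_⟩
      · intro v hv; simp [SimpleGraph.Subgraph.verts] at hv
      · intro a ha b hb
        exact h a ha.1 b hb.1

/-- Swap the two sides of a bipartite tournament. -/
def BipTournament.swap {α : Type*} (D : BipTournament α) : BipTournament α where
  U := D.V
  V := D.U
  A := D.A
  disj := D.disj.symm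
  cover := by rw [Set.union_comm]; exact D.cover
  orient := fun v hv u hu => (D.orient u hu v hv).symm
  arcs := fun x y h => (D.arcs x y h).symm

lemma niche_swap {α : Type*} (D : BipTournament α) : D.swap.niche = D.niche := rfl

lemma same_side_key {α : Type*} (D : BipTournament α) (hV : D.V.Nonempty)
    {u1 u2 u3 : α} (h1 : u1 ∈ D.U) (h2 : u2 ∈ D.U) (h3 : u3 ∈ D.U)
    (d12 : u1 ≠ u2) (d13 : u1 ≠ u3) (d23 : u2 ≠ u3)
    (n12 : ¬ D.niche.Adj u1 u2) (n13 : ¬ D.niche.Adj u1 u3) :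
    D.niche.Adj u2 u3 := by
  obtain ⟨v, hv⟩ := hV
  have o1 := D.orient u1 h1 v hv
  have o2 := D.orient u2 h2 v hv
  have o3 := D.orient u3 h3 v hv
  have key2 : ∀ w : α, ¬ (D.A u1 w ∧ D.A u2 w) ∧ ¬ (D.A w u1 ∧ D.A w u2) :=
    fun w => ⟨fun hw => n12 ⟨d12, Or.inl ⟨w, hw⟩⟩, fun hw => n12 ⟨d12, Or.inr ⟨w, hw⟩⟩⟩
  have key3 : ∀ w : α, ¬ (D.A u1 w ∧ D.A u3 w) ∧ ¬ (D.A w u1 ∧ D.A w u3) :=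
    fun w => ⟨fun hw => n13 ⟨d13, Or.inl ⟨w, hw⟩⟩, fun hw => n13 ⟨d13, Or.inr ⟨w, hw⟩⟩⟩
  rcases o1 with ⟨ha1, hb1⟩ | ⟨hb1, ha1⟩
  · have h2' : D.A v u2 := by
      rcases o2 with ⟨ha2, _⟩ | ⟨hb2, _⟩
      · exact absurd ⟨ha1, ha2⟩ (key2 v).1
      · exact hb2
    have h3' : D.A v u3 := by
      rcases o3 with ⟨ha3, _⟩ | ⟨hb3, _⟩
      · exact absurd ⟨ha1, ha3⟩ (key3 v).1
      · exact hb3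
    exact ⟨d23, Or.inr ⟨v, h2', h3'⟩⟩
  · have h2' : D.A u2 v := by
      rcases o2 with ⟨ha2, _⟩ | ⟨hb2, _⟩
      · exact ha2
      · exact absurd ⟨hb1, hb2⟩ (key2 v).2
    have h3' : D.A u3 v := by
      rcases o3 with ⟨ha3, _⟩ | ⟨hb3, _⟩
      · exact ha3
      · exact absurd ⟨hb1, hb3⟩ (key3 v).2
    exact ⟨d23, Or.inl ⟨v, h2', h3'⟩⟩

theorem stmt19 {α : Type*} [Fintype α] (D : BipTournament α)
    (hU : D.U.Nonempty) (hV : D.V.Nonempty) :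
    ∃ M : D.niche.Subgraph, M.IsMatching ∧ (Set.univ \ M.verts).ncard ≤ 4 := by
  classical
  obtain ⟨M, hM, -, hmax⟩ := greedy_matching D.niche Set.univ
  refine ⟨M, hM, ?_⟩
  set s : Set α := Set.univ \ M.verts with hs
  have hindep : ∀ x ∈ s, ∀ y ∈ s, ¬ D.niche.Adj x y := by
    intro x hx y hy
    exact hmax x ⟨trivial, hx.2⟩ y ⟨trivial, hy.2⟩
  have hside : ∀ (W : Set α), W.Nonempty →
      (∀ u1 ∈ W, ∀ u2 ∈ W, ∀ u3 ∈ W, u1 ≠ u2 → u1 ≠ u3 → u2 ≠ u3 →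
        ¬ D.niche.Adj u1 u2 → ¬ D.niche.Adj u1 u3 → D.niche.Adj u2 u3) → True := fun _ _ _ => trivial
  -- bound each side
  have hbound : ∀ (W : Set α), W = D.U ∨ W = D.V → (s ∩ W).ncard ≤ 2 := by
    intro W hW
    by_contra hc
    push_neg at hc
    obtain ⟨t, hts, htc⟩ := Set.exists_subset_card_eq (n := 3) (by omega : 3 ≤ (s ∩ W).ncard)
    obtain ⟨a, b, c, hab, hac, hbc, rfl⟩ := Set.ncard_eq_three.mp htc
    have ha := hts (by simp : a ∈ ({a, b, c} : Set α))
    have hb := hts (by simp : b ∈ ({a, b, c} : Set α))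
    have hcc := hts (by simp : c ∈ ({a, b, c} : Set α))
    have nab : ¬ D.niche.Adj a b := hindep a ha.1 b hb.1
    have nac : ¬ D.niche.Adj a c := hindep a ha.1 c hcc.1
    have nbc : ¬ D.niche.Adj b c := hindep b hb.1 c hcc.1
    rcases hW with rfl | rfl
    · exact nbc (same_side_key D hV ha.2 hb.2 hcc.2 hab hac hbc nab nac)
    · -- symmetric statement for V: swap roles of U and V in the tournament
      exact nbc (same_side_key D.swap (hU) ha.2 hb.2 hcc.2 hab hac hbc
        (fun h => nab (niche_swap D ▸ h)) (fun h => nac (niche_swap D ▸ h)))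
  have h1 : (s ∩ D.U).ncard ≤ 2 := hbound D.U (Or.inl rfl)
  have h2 : (s ∩ D.V).ncard ≤ 2 := hbound D.V (Or.inr rfl)
  have hsub : s ⊆ (s ∩ D.U) ∪ (s ∩ D.V) := by
    intro x hx
    have : x ∈ D.U ∪ D.V := by rw [D.cover]; trivial
    rcases this with h | h
    · exact Or.inl ⟨hx, h⟩
    · exact Or.inr ⟨hx, h⟩
  calc s.ncard ≤ ((s ∩ D.U) ∪ (s ∩ D.V)).ncard :=
        Set.ncard_le_ncard hsub (Set.toFinite _)
    _ ≤ (s ∩ D.U).ncard + (s ∩ D.V).ncard := Set.ncard_union_le _ _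
    _ ≤ 4 := by omega
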